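/- Let ψ′(0+) > −∞. Let C_U ∈ ℝ, let f : ℝ → ℝ be continuous and piecewise continuously differentiable, set f̃(x) = f(x) + C_U q x, and assume e^{−Φ(q) y} f̃(y) → 0 as y → ∞, Ψ(s*; |f|) < ∞, and Ψ(x; |f̃′|) < ∞ for all x. Suppose a̲ ≤ ā are real numbers such that f̃′(x) < 0 for x < ā and f̃′(x) > 0 for x > ā, and Ψ(x; f̃′) < 0 for x < a̲ while Ψ(x; f̃′) > 0 for x > a̲. Fix s* ≤ a̲ and define v(x) = ((Φ(q)/q) Ψ(s*; f) + C_U/Φ(q)) Z(x−s*) − C_U R(x−s*) − φ_{s*}(x; f). Then for every x < s*, v is affine with slope −C_U at x, the integral appearing in L v(x) converges absolutely, and (L − q) v(x) + f(x) = f̃(x) − f̃(s*) − Ψ(s*; f̃′) ≥ 0. -/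

import Mathlib

open MeasureTheory Set Filter Topology

noncomputable section

/-- The Laplace exponent of a spectrally negative Lévy process with data `(γ, σ, ν)`. -/
def psi (γ σ : ℝ) (ν : Measure ℝ) (s : ℝ) : ℝ :=
  γ * s + σ ^ 2 * s ^ 2 / 2 +
    ∫ z in Set.Iio (0 : ℝ), (Real.exp (s * z) - 1 - s * z * (if -1 < z then (1:ℝ) else 0)) ∂ν

/-- `Φ(q) = sup {λ ≥ 0 : ψ(λ) = q}`. -/
def PhiQ (γ σ : ℝ) (ν : Measure ℝ) (q : ℝ) : ℝ :=
  sSup {l : ℝ | 0 ≤ l ∧ psi γ σ ν l = q}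

/-- `Z^{(q)}(x) = 1 + q ∫₀ˣ W(y) dy`. -/
def Zfun (q : ℝ) (W : ℝ → ℝ) (x : ℝ) : ℝ := 1 + q * ∫ y in (0:ℝ)..x, W y

/-- `Z̄^{(q)}(x) = ∫₀ˣ Z(z) dz`. -/
def Zbar (q : ℝ) (W : ℝ → ℝ) (x : ℝ) : ℝ := ∫ z in (0:ℝ)..x, Zfun q W z

/-- `R^{(q)}(x) = Z̄(x) + ψ'(0+)/q`. -/
def Rfun (q psi'0 : ℝ) (W : ℝ → ℝ) (x : ℝ) : ℝ := Zbar q W x + psi'0 / q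

/-- `Ψ(s; h) = ∫_s^∞ e^{-Φ(q)(y-s)} h(y) dy`. -/
def PsiInt (Φq s : ℝ) (h : ℝ → ℝ) : ℝ := ∫ y in Set.Ioi s, Real.exp (-Φq * (y - s)) * h y

/-- `φ_s(x; h) = ∫_s^x W(x-y) h(y) dy`. -/
def phiInt (W : ℝ → ℝ) (s x : ℝ) (h : ℝ → ℝ) : ℝ := ∫ y in s..x, W (x - y) * h y

/-- Integrand of the nonlocal part of the generator `L`. -/
def genInt (h : ℝ → ℝ) (x z : ℝ) : ℝ :=
  h (x + z) - h x - deriv h x * z * (if -1 < z then (1:ℝ) else 0)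

/-- The generator `L` of the Lévy process, applied to a sufficiently smooth function. -/
def Lgen (γ σ : ℝ) (ν : Measure ℝ) (h : ℝ → ℝ) (x : ℝ) : ℝ :=
  γ * deriv h x + σ ^ 2 / 2 * deriv (deriv h) x + ∫ z in Set.Iio (0 : ℝ), genInt h x z ∂ν

/-- Candidate value function for impulse control:
`v(x) = ((Φ(q)/q) Ψ(s;f) + C_U/Φ(q)) Z(x−s) − C_U R(x−s) − φ_s(x; f)`. -/
def vImp (q Φq psi'0 C_U s : ℝ) (W f : ℝ → ℝ) (x : ℝ) : ℝ :=
  (Φq / q * PsiInt Φq s f + C_U / Φq) * Zfun q W (x - s)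
    - C_U * Rfun q psi'0 W (x - s) - phiInt W s x f

lemma ae_ne_zero : ∀ᵐ (y : ℝ) ∂volume, y ≠ (0:ℝ) := by
  refine ae_iff.2 ?_
  have : {a : ℝ | ¬a ≠ 0} = {0} := by ext a; simp
  rw [this]; exact measure_singleton 0

lemma Zfun_nonpos (q : ℝ) (W : ℝ → ℝ) (hW0 : ∀ x < 0, W x = 0) {t : ℝ} (ht : t ≤ 0) :
    Zfun q W t = 1 := by
  have hz : ∀ᵐ y ∂(volume.restrict (Set.Ioc t 0)), W y = (0:ℝ) := by
    filter_upwards [ae_restrict_mem measurableSet_Ioc, ae_restrict_of_ae ae_ne_zero] with y hy hne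
    exact hW0 y (lt_of_le_of_ne hy.2 hne)
  have : ∫ y in (0:ℝ)..t, W y = 0 := by
    rw [intervalIntegral.integral_symm, intervalIntegral.integral_of_le ht,
      integral_eq_zero_of_ae hz, neg_zero]
  simp [Zfun, this]

lemma Zbar_nonpos (q : ℝ) (W : ℝ → ℝ) (hW0 : ∀ x < 0, W x = 0) {t : ℝ} (ht : t ≤ 0) :
    Zbar q W t = t := by
  have : Set.EqOn (Zfun q W) (fun _ => (1:ℝ)) (Set.uIcc 0 t) := by
    intro z hz
    rw [Set.uIcc_of_ge ht] at hz
    exact Zfun_nonpos q W hW0 hz.2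
  rw [Zbar, intervalIntegral.integral_congr this]
  simp

lemma phiInt_nonpos (W h : ℝ → ℝ) (hW0 : ∀ x < 0, W x = 0) {s x : ℝ} (hx : x ≤ s) :
    phiInt W s x h = 0 := by
  have hz : ∀ᵐ y ∂(volume.restrict (Set.Ioc x s)), W (x - y) * h y = (0:ℝ) := by
    filter_upwards [ae_restrict_mem measurableSet_Ioc] with y hy
    rw [hW0 _ (by linarith [hy.1] : x - y < 0), zero_mul]
  rw [phiInt, intervalIntegral.integral_symm, intervalIntegral.integral_of_le hx,
    integral_eq_zero_of_ae hz, neg_zero]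

lemma vImp_affine (q Φq psi'0 C_U s : ℝ) (W f : ℝ → ℝ) (hW0 : ∀ x < 0, W x = 0)
    {x : ℝ} (hx : x ≤ s) :
    vImp q Φq psi'0 C_U s W f x = vImp q Φq psi'0 C_U s W f s - C_U * (x - s) := by
  have h1 : vImp q Φq psi'0 C_U s W f x
      = (Φq / q * PsiInt Φq s f + C_U / Φq) - C_U * ((x - s) + psi'0 / q) := by
    rw [vImp, Zfun_nonpos q W hW0 (by linarith), Rfun, Zbar_nonpos q W hW0 (by linarith),
      phiInt_nonpos W f hW0 hx]
    ring
  have h2 : vImp q Φq psi'0 C_U s W f s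
      = (Φq / q * PsiInt Φq s f + C_U / Φq) - C_U * (psi'0 / q) := by
    rw [vImp, Zfun_nonpos q W hW0 (by simp), Rfun, Zbar_nonpos q W hW0 (by simp),
      phiInt_nonpos W f hW0 le_rfl]
    ring
  rw [h1, h2]; ring

lemma deriv_vImp (q Φq psi'0 C_U s : ℝ) (W f : ℝ → ℝ) (hW0 : ∀ x < 0, W x = 0)
    {x : ℝ} (hx : x < s) :
    deriv (vImp q Φq psi'0 C_U s W f) x = -C_U := by
  have hev : vImp q Φq psi'0 C_U s W f =ᶠ[𝓝 x]
      (fun y => vImp q Φq psi'0 C_U s W f s - C_U * (y - s)) := by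
    filter_upwards [Iio_mem_nhds hx] with y hy
    exact vImp_affine q Φq psi'0 C_U s W f hW0 (le_of_lt hy)
  rw [hev.deriv_eq]
  have : HasDerivAt (fun y => vImp q Φq psi'0 C_U s W f s - C_U * (y - s)) (-C_U) x := by
    simpa using ((hasDerivAt_id x).sub_const s).const_mul C_U |>.const_sub
      (vImp q Φq psi'0 C_U s W f s)
  exact this.deriv

lemma deriv2_vImp (q Φq psi'0 C_U s : ℝ) (W f : ℝ → ℝ) (hW0 : ∀ x < 0, W x = 0)
    {x : ℝ} (hx : x < s) :
    deriv (deriv (vImp q Φq psi'0 C_U s W f)) x = 0 := by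
  have hev : deriv (vImp q Φq psi'0 C_U s W f) =ᶠ[𝓝 x] (fun _ => -C_U) := by
    filter_upwards [Iio_mem_nhds hx] with y hy
    exact deriv_vImp q Φq psi'0 C_U s W f hW0 hy
  rw [hev.deriv_eq, deriv_const]

variable {γ σ : ℝ} {ν : Measure ℝ}

lemma levy_finite (hνint : Integrable (fun z => min 1 (z ^ 2)) ν) :
    ν (Set.Iic (-1:ℝ)) < ⊤ := by
  have h1 : IntegrableOn (fun _ : ℝ => (1:ℝ)) (Set.Iic (-1:ℝ)) ν := by
    refine (hνint.integrableOn.congr_fun (fun z hz => ?_) measurableSet_Iic)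
    have hz' : z ≤ -1 := hz
    have : (1:ℝ) ≤ z^2 := by nlinarith
    simp [min_eq_left this]
  rcases (integrableOn_const_iff (C := (1:ℝ))).1 h1 with h | h
  · norm_num at h
  · exact h

lemma levy_sq (hνint : Integrable (fun z => min 1 (z ^ 2)) ν) :
    IntegrableOn (fun z : ℝ => z ^ 2) (Set.Ioo (-1:ℝ) 0) ν := by
  refine (hνint.integrableOn.congr_fun (fun z hz => ?_) measurableSet_Ioo)
  have : z^2 ≤ 1 := by nlinarith [hz.1, hz.2]
  simp [min_eq_right this]

lemma levy_int_Iic (hνint : Integrable (fun z => min 1 (z ^ 2)) ν) {s : ℝ} (hs : 0 < s) :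
    IntegrableOn (fun z : ℝ => Real.exp (s * z) - 1) (Set.Iic (-1:ℝ)) ν := by
  have : IsFiniteMeasure (ν.restrict (Set.Iic (-1:ℝ))) :=
    ⟨by rw [Measure.restrict_apply_univ]; exact levy_finite hνint⟩
  refine Integrable.mono' (integrable_const 1) ?_ ?_
  · exact ((Real.continuous_exp.comp (continuous_const.mul continuous_id)).sub
      continuous_const).aestronglyMeasurable
  · filter_upwards [ae_restrict_mem measurableSet_Iic] with z hz
    have hz' : z ≤ -1 := hz
    have h1 : Real.exp (s * z) ≤ 1 := Real.exp_le_one_iff.2 (by nlinarith)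
    have h2 : 0 < Real.exp (s * z) := Real.exp_pos _
    rw [Real.norm_eq_abs, abs_le]; constructor <;> linarith

lemma levy_int_Ioo (hνint : Integrable (fun z => min 1 (z ^ 2)) ν) {s : ℝ} (hs : 0 < s)
    (hs1 : s ≤ 1) :
    IntegrableOn (fun z : ℝ => Real.exp (s * z) - 1 - s * z) (Set.Ioo (-1:ℝ) 0) ν := by
  refine Integrable.mono' (levy_sq hνint) ?_ ?_
  · exact (((Real.continuous_exp.comp (continuous_const.mul continuous_id)).sub
      continuous_const).sub (continuous_const.mul continuous_id)).aestronglyMeasurable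
  · filter_upwards [ae_restrict_mem measurableSet_Ioo] with z hz
    have habs : |s * z| ≤ 1 := by
      rw [abs_mul, abs_of_pos hs]
      have : |z| ≤ 1 := by rw [abs_le]; constructor <;> [linarith [hz.1]; linarith [hz.2]]
      nlinarith [abs_nonneg z]
    have := Real.abs_exp_sub_one_sub_id_le habs
    rw [Real.norm_eq_abs]
    have hsq : s^2 ≤ 1 := by nlinarith
    calc |Real.exp (s*z) - 1 - s*z| ≤ (s*z)^2 := this
      _ ≤ z^2 := by nlinarith [sq_nonneg z]

lemma psi_split (hνint : Integrable (fun z => min 1 (z ^ 2)) ν) {s : ℝ} (hs : 0 < s)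
    (hs1 : s ≤ 1) :
    psi γ σ ν s = γ * s + σ ^ 2 * s ^ 2 / 2
      + (∫ z in Set.Ioo (-1:ℝ) 0, (Real.exp (s * z) - 1 - s * z) ∂ν)
      + (∫ z in Set.Iic (-1:ℝ), (Real.exp (s * z) - 1) ∂ν) := by
  have hunion : Set.Iic (-1:ℝ) ∪ Set.Ioo (-1:ℝ) 0 = Set.Iio 0 := by
    ext z; simp only [Set.mem_union, Set.mem_Iic, Set.mem_Ioo, Set.mem_Iio]
    constructor
    · rintro (h | h)
      · linarith
      · exact h.2
    · intro h
      rcases le_or_gt z (-1) with h1 | h1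
      · exact Or.inl h1
      · exact Or.inr ⟨h1, h⟩
  have hdisj : Disjoint (Set.Iic (-1:ℝ)) (Set.Ioo (-1:ℝ) 0) := by
    rw [Set.disjoint_left]; rintro z hz ⟨h1, _⟩; exact absurd hz (not_le.2 h1)
  have hint1 : IntegrableOn
      (fun z : ℝ => Real.exp (s * z) - 1 - s * z * (if -1 < z then (1:ℝ) else 0))
      (Set.Iic (-1:ℝ)) ν := by
    refine (levy_int_Iic hνint hs).congr_fun (fun z hz => ?_) measurableSet_Iic
    simp only [Set.mem_Iic] at hz
    rw [if_neg (by linarith)]; ring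
  have hint2 : IntegrableOn
      (fun z : ℝ => Real.exp (s * z) - 1 - s * z * (if -1 < z then (1:ℝ) else 0))
      (Set.Ioo (-1:ℝ) 0) ν := by
    refine (levy_int_Ioo hνint hs hs1).congr_fun (fun z hz => ?_) measurableSet_Ioo
    rw [if_pos hz.1]; ring
  have := setIntegral_union hdisj measurableSet_Ioo hint1 hint2
  rw [hunion] at this
  rw [psi, this]
  have e1 : ∫ z in Set.Iic (-1:ℝ),
      (Real.exp (s * z) - 1 - s * z * (if -1 < z then (1:ℝ) else 0)) ∂ν
      = ∫ z in Set.Iic (-1:ℝ), (Real.exp (s * z) - 1) ∂ν := by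
    refine setIntegral_congr_fun measurableSet_Iic (fun z hz => ?_)
    simp only [Set.mem_Iic] at hz
    rw [if_neg (by linarith)]; ring
  have e2 : ∫ z in Set.Ioo (-1:ℝ) 0,
      (Real.exp (s * z) - 1 - s * z * (if -1 < z then (1:ℝ) else 0)) ∂ν
      = ∫ z in Set.Ioo (-1:ℝ) 0, (Real.exp (s * z) - 1 - s * z) ∂ν := by
    refine setIntegral_congr_fun measurableSet_Ioo (fun z hz => ?_)
    rw [if_pos hz.1]; ring
  rw [e1, e2]; ring

lemma psi_zero : psi γ σ ν 0 = 0 := by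
  simp [psi]

lemma levy_key (hνint : Integrable (fun z => min 1 (z ^ 2)) ν)
    {psi'0 : ℝ} (hpsi'0 : HasDerivWithinAt (psi γ σ ν) psi'0 (Set.Ici 0) 0) :
    IntegrableOn (fun z : ℝ => -z) (Set.Iic (-1:ℝ)) ν ∧
      (∫ z in Set.Iic (-1:ℝ), -z ∂ν) = γ - psi'0 := by
  classical
  -- the sequence sₙ = 1/(n+1)
  set sn : ℕ → ℝ := fun n => ((n:ℝ)+1)⁻¹ with hsn_def
  have hsn_pos : ∀ n, 0 < sn n := fun n => by positivity
  have hsn_le1 : ∀ n, sn n ≤ 1 := fun n => by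
    rw [hsn_def]
    rw [inv_le_one_iff₀]
    right; push_cast; linarith [Nat.cast_nonneg (α := ℝ) n]
  have hsn0 : Tendsto sn atTop (𝓝 0) := by
    have := tendsto_one_div_add_atTop_nhds_zero_nat (𝕜 := ℝ)
    simpa [hsn_def, one_div] using this
  have hsnIoi : Tendsto sn atTop (𝓝[>] 0) :=
    tendsto_nhdsWithin_of_tendsto_nhds_of_eventually_within _ hsn0
      (Eventually.of_forall fun n => hsn_pos n)
  -- slope of psi
  have hslope : Tendsto (fun s => psi γ σ ν s / s) (𝓝[>] 0) (𝓝 psi'0) := by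
    have h1 := (hasDerivWithinAt_iff_tendsto_slope).1 hpsi'0
    have h2 : Set.Ici (0:ℝ) \ {0} = Set.Ioi 0 := by
      ext z; simp only [Set.mem_diff, Set.mem_Ici, Set.mem_singleton_iff, Set.mem_Ioi]
      constructor
      · rintro ⟨h, h'⟩; exact lt_of_le_of_ne h (Ne.symm h')
      · intro h; exact ⟨le_of_lt h, ne_of_gt h⟩
    rw [h2] at h1
    refine h1.congr' ?_
    filter_upwards [self_mem_nhdsWithin] with s hs
    rw [slope_def_field, psi_zero, sub_zero, sub_zero]
  have hpsilim : Tendsto (fun n => psi γ σ ν (sn n) / sn n) atTop (𝓝 psi'0) :=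
    hslope.comp hsnIoi
  -- the integrals Mn
  set Mn : ℕ → ℝ :=
    fun n => ∫ z in Set.Iic (-1:ℝ), (1 - Real.exp (sn n * z)) * (sn n)⁻¹ ∂ν with hMn_def
  have hfin : IsFiniteMeasure (ν.restrict (Set.Iic (-1:ℝ))) :=
    ⟨by rw [Measure.restrict_apply_univ]; exact levy_finite hνint⟩
  have hint1 : ∀ n, IntegrableOn (fun z => (1 - Real.exp (sn n * z)) * (sn n)⁻¹)
      (Set.Iic (-1:ℝ)) ν := fun n => by
    have h := (levy_int_Iic hνint (hsn_pos n)).neg.mul_const (sn n)⁻¹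
    have h2 : IntegrableOn (fun z => (-(Real.exp (sn n * z) - 1)) * (sn n)⁻¹)
        (Set.Iic (-1:ℝ)) ν := h
    exact h2.congr_fun (fun z _ => by ring) measurableSet_Iic
  -- Mn in terms of psi
  have hMn_eq : ∀ n, Mn n = γ + σ^2 * sn n / 2
      + (∫ z in Set.Ioo (-1:ℝ) 0, (Real.exp (sn n * z) - 1 - sn n * z) ∂ν) * (sn n)⁻¹
      - psi γ σ ν (sn n) / sn n := by
    intro n
    have hsplit := psi_split (γ := γ) (σ := σ) hνint (hsn_pos n) (hsn_le1 n)
    have e1 : Mn n = (∫ z in Set.Iic (-1:ℝ), (1 - Real.exp (sn n * z)) ∂ν) * (sn n)⁻¹ := by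
      rw [hMn_def]; exact integral_mul_const _ _
    have e2 : ∫ z in Set.Iic (-1:ℝ), (1 - Real.exp (sn n * z)) ∂ν
        = -(∫ z in Set.Iic (-1:ℝ), (Real.exp (sn n * z) - 1) ∂ν) := by
      rw [← integral_neg]
      exact setIntegral_congr_fun measurableSet_Iic (fun z _ => by ring)
    have hs := hsn_pos n
    have e3 : ∫ z in Set.Iic (-1:ℝ), (Real.exp (sn n * z) - 1) ∂ν
        = psi γ σ ν (sn n) - γ * sn n - σ^2 * (sn n)^2/2
          - ∫ z in Set.Ioo (-1:ℝ) 0, (Real.exp (sn n * z) - 1 - sn n * z) ∂ν := by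
      rw [hsplit]; ring
    rw [e1, e2, e3]
    field_simp
    ring
  -- Bn / sn → 0
  have hBn : Tendsto (fun n =>
      (∫ z in Set.Ioo (-1:ℝ) 0, (Real.exp (sn n * z) - 1 - sn n * z) ∂ν) * (sn n)⁻¹)
      atTop (𝓝 0) := by
    have hC : 0 ≤ ∫ z in Set.Ioo (-1:ℝ) 0, z^2 ∂ν :=
      integral_nonneg (fun z => sq_nonneg z)
    refine squeeze_zero_norm (a := fun n => sn n * ∫ z in Set.Ioo (-1:ℝ) 0, z^2 ∂ν) (fun n => ?_) ?_
    · have hb : ∀ᵐ z ∂(ν.restrict (Set.Ioo (-1:ℝ) 0)),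
          ‖Real.exp (sn n * z) - 1 - sn n * z‖ ≤ (sn n)^2 * z^2 := by
        filter_upwards [ae_restrict_mem measurableSet_Ioo] with z hz
        have habs : |sn n * z| ≤ 1 := by
          rw [abs_mul, abs_of_pos (hsn_pos n)]
          have h1 : |z| ≤ 1 := by
            rw [abs_le]; exact ⟨by linarith [hz.1], by linarith [hz.2]⟩
          nlinarith [abs_nonneg z, hsn_pos n, hsn_le1 n]
        have := Real.abs_exp_sub_one_sub_id_le habs
        rw [Real.norm_eq_abs]
        calc |Real.exp (sn n * z) - 1 - sn n * z| ≤ (sn n * z)^2 := this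
          _ = (sn n)^2 * z^2 := by ring
      have h2 : ‖∫ z in Set.Ioo (-1:ℝ) 0, (Real.exp (sn n * z) - 1 - sn n * z) ∂ν‖
          ≤ ∫ z in Set.Ioo (-1:ℝ) 0, (sn n)^2 * z^2 ∂ν := by
        refine norm_integral_le_of_norm_le ((levy_sq hνint).const_mul ((sn n)^2)) hb
      rw [norm_mul, Real.norm_eq_abs ((sn n)⁻¹), abs_of_pos (inv_pos.2 (hsn_pos n))]
      calc ‖∫ z in Set.Ioo (-1:ℝ) 0, (Real.exp (sn n * z) - 1 - sn n * z) ∂ν‖ * (sn n)⁻¹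
          ≤ (∫ z in Set.Ioo (-1:ℝ) 0, (sn n)^2 * z^2 ∂ν) * (sn n)⁻¹ := by
            exact mul_le_mul_of_nonneg_right h2 (le_of_lt (inv_pos.2 (hsn_pos n)))
        _ = sn n * ∫ z in Set.Ioo (-1:ℝ) 0, z^2 ∂ν := by
            rw [integral_const_mul]
            field_simp
    · have : Tendsto (fun n => sn n * ∫ z in Set.Ioo (-1:ℝ) 0, z^2 ∂ν) atTop (𝓝 0) := by
        simpa using hsn0.mul_const (∫ z in Set.Ioo (-1:ℝ) 0, z^2 ∂ν)
      exact this
  -- Mn → γ - psi'0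
  have hMnlim : Tendsto Mn atTop (𝓝 (γ - psi'0)) := by
    have : Tendsto (fun n => γ + σ^2 * sn n / 2
        + (∫ z in Set.Ioo (-1:ℝ) 0, (Real.exp (sn n * z) - 1 - sn n * z) ∂ν) * (sn n)⁻¹
        - psi γ σ ν (sn n) / sn n) atTop (𝓝 (γ + σ^2 * 0 / 2 + 0 - psi'0)) := by
      exact (((tendsto_const_nhds.add ((hsn0.const_mul (σ^2)).div_const 2)).add hBn).sub
        hpsilim)
    simp only [mul_zero, zero_div, add_zero] at this
    exact Tendsto.congr (fun n => (hMn_eq n).symm) this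
  -- pointwise convergence
  have hpt : ∀ z : ℝ, Tendsto (fun n => (1 - Real.exp (sn n * z)) * (sn n)⁻¹) atTop (𝓝 (-z)) := by
    intro z
    have hg : HasDerivAt (fun s : ℝ => 1 - Real.exp (s * z)) (-z) 0 := by
      have h1 : HasDerivAt (fun s : ℝ => s * z) z 0 := hasDerivAt_mul_const z
      have h3 := (h1.exp).const_sub 1
      simpa using h3
    have h4 := hasDerivAt_iff_tendsto_slope.1 hg
    have h5 : Tendsto sn atTop (𝓝[≠] 0) :=
      tendsto_nhdsWithin_of_tendsto_nhds_of_eventually_within _ hsn0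
        (Eventually.of_forall fun n => ne_of_gt (hsn_pos n))
    refine (h4.comp h5).congr (fun n => ?_)
    simp only [Function.comp_apply, slope_def_field]
    rw [zero_mul, Real.exp_zero, sub_zero, show (1:ℝ) - 1 = 0 by ring, sub_zero,
      div_eq_mul_inv]
  -- bounds
  have hb : ∀ n, ∀ z : ℝ, z ≤ -1 →
      0 ≤ (1 - Real.exp (sn n * z)) * (sn n)⁻¹ ∧
      (1 - Real.exp (sn n * z)) * (sn n)⁻¹ ≤ -z := by
    intro n z hz
    have hs := hsn_pos n
    have h1 : Real.exp (sn n * z) ≤ 1 := Real.exp_le_one_iff.2 (by nlinarith)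
    have h2 : sn n * z + 1 ≤ Real.exp (sn n * z) := Real.add_one_le_exp _
    constructor
    · exact mul_nonneg (by linarith) (le_of_lt (inv_pos.2 hs))
    · have h3 : (1 - Real.exp (sn n * z)) ≤ sn n * (-z) := by linarith
      calc (1 - Real.exp (sn n * z)) * (sn n)⁻¹
          ≤ (sn n * (-z)) * (sn n)⁻¹ :=
            mul_le_mul_of_nonneg_right h3 (le_of_lt (inv_pos.2 hs))
        _ = -z := by field_simp
  have hcontF : ∀ n, Continuous fun z : ℝ => (1 - Real.exp (sn n * z)) * (sn n)⁻¹ := fun n =>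
    ((continuous_const.sub (Real.continuous_exp.comp
      (continuous_const.mul continuous_id))).mul continuous_const)
  -- Fatou
  have hFmeas : ∀ n, Measurable fun z =>
      ENNReal.ofReal ((1 - Real.exp (sn n * z)) * (sn n)⁻¹) := fun n =>
    (hcontF n).measurable.ennreal_ofReal
  have hFatou := lintegral_liminf_le (μ := ν.restrict (Set.Iic (-1:ℝ))) (u := atTop) hFmeas
  have hLHSeq : (∫⁻ z, liminf (fun n =>
        ENNReal.ofReal ((1 - Real.exp (sn n * z)) * (sn n)⁻¹)) atTop
        ∂(ν.restrict (Set.Iic (-1:ℝ))))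
      = ∫⁻ z in Set.Iic (-1:ℝ), ENNReal.ofReal (-z) ∂ν := by
    refine lintegral_congr (fun z => ?_)
    exact ((ENNReal.continuous_ofReal.tendsto _).comp (hpt z)).liminf_eq
  have hRHS : ∀ n, (∫⁻ z, ENNReal.ofReal ((1 - Real.exp (sn n * z)) * (sn n)⁻¹)
      ∂(ν.restrict (Set.Iic (-1:ℝ)))) = ENNReal.ofReal (Mn n) := by
    intro n
    rw [← ofReal_integral_eq_lintegral_ofReal (hint1 n) ?_]
    filter_upwards [ae_restrict_mem measurableSet_Iic] with z hz
    exact (hb n z hz).1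
  have hlim2 : Tendsto (fun n => ENNReal.ofReal (Mn n)) atTop
      (𝓝 (ENNReal.ofReal (γ - psi'0))) :=
    (ENNReal.continuous_ofReal.tendsto _).comp hMnlim
  have hkey : (∫⁻ z in Set.Iic (-1:ℝ), ENNReal.ofReal (-z) ∂ν)
      ≤ ENNReal.ofReal (γ - psi'0) := by
    rw [← hLHSeq]
    refine le_trans hFatou ?_
    have : (fun n => (∫⁻ z, ENNReal.ofReal ((1 - Real.exp (sn n * z)) * (sn n)⁻¹)
        ∂(ν.restrict (Set.Iic (-1:ℝ))))) = fun n => ENNReal.ofReal (Mn n) := funext hRHS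
    rw [this, hlim2.liminf_eq]
  have hIntNeg : IntegrableOn (fun z : ℝ => -z) (Set.Iic (-1:ℝ)) ν := by
    constructor
    · exact (continuous_neg.comp continuous_id).aestronglyMeasurable
    · rw [hasFiniteIntegral_iff_norm]
      have heq : (∫⁻ z, ENNReal.ofReal ‖-z‖ ∂(ν.restrict (Set.Iic (-1:ℝ))))
          = ∫⁻ z in Set.Iic (-1:ℝ), ENNReal.ofReal (-z) ∂ν := by
        refine lintegral_congr_ae ?_
        filter_upwards [ae_restrict_mem measurableSet_Iic] with z hz
        have hz' : z ≤ -1 := hz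
        rw [norm_neg, Real.norm_eq_abs, abs_of_nonpos (by linarith : z ≤ 0)]
      rw [heq]
      exact lt_of_le_of_lt hkey ENNReal.ofReal_lt_top
  have hDCT : Tendsto Mn atTop (𝓝 (∫ z in Set.Iic (-1:ℝ), -z ∂ν)) := by
    refine tendsto_integral_of_dominated_convergence (fun z => -z)
      (fun n => (hcontF n).aestronglyMeasurable) hIntNeg (fun n => ?_) ?_
    · filter_upwards [ae_restrict_mem measurableSet_Iic] with z hz
      rcases hb n z hz with ⟨h1, h2⟩
      rw [Real.norm_eq_abs, abs_of_nonneg h1]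
      exact h2
    · exact Eventually.of_forall (fun z => hpt z)
  exact ⟨hIntNeg, tendsto_nhds_unique hDCT hMnlim⟩


lemma Iio_split : Set.Iic (-1:ℝ) ∪ Set.Ioo (-1:ℝ) 0 = Set.Iio 0 := by
  ext z
  simp only [Set.mem_union, Set.mem_Iic, Set.mem_Ioo, Set.mem_Iio]
  constructor
  · rintro (h | h)
    · linarith
    · exact h.2
  · intro h
    rcases le_or_gt z (-1) with h1 | h1
    · exact Or.inl h1
    · exact Or.inr ⟨h1, h⟩

lemma Iio_disj : Disjoint (Set.Iic (-1:ℝ)) (Set.Ioo (-1:ℝ) 0) := by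
  rw [Set.disjoint_left]
  rintro z hz ⟨h1, _⟩
  exact absurd hz (not_le.2 h1)

variable {Φ s : ℝ}

lemma expDeriv (x : ℝ) :
    HasDerivAt (fun y => Real.exp (-Φ * (y - s))) (Real.exp (-Φ * (x - s)) * (-Φ)) x := by
  have h1 : HasDerivAt (fun y : ℝ => -Φ * (y - s)) (-Φ) x := by
    simpa using ((hasDerivAt_id x).sub_const s).const_mul (-Φ)
  exact h1.exp

lemma expTendsto (hΦ : 0 < Φ) : Tendsto (fun y => Real.exp (-Φ * (y - s))) atTop (𝓝 0) := by
  apply Real.tendsto_exp_atBot.comp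
  have : Tendsto (fun y : ℝ => y - s) atTop atTop := tendsto_atTop_add_const_right _ _ tendsto_id
  have h2 : Tendsto (fun y : ℝ => Φ * (y - s)) atTop atTop :=
    (tendsto_const_mul_atTop_of_pos hΦ).2 this
  have h3 := tendsto_neg_atBot_iff.2 h2
  refine h3.congr (fun y => by ring)

lemma expInt_integrable (hΦ : 0 < Φ) (s : ℝ) :
    IntegrableOn (fun y => Real.exp (-Φ * (y - s))) (Set.Ioi s) := by
  have h : IntegrableOn (fun y => Real.exp (Φ * s) * Real.exp (-Φ * y)) (Set.Ioi s) :=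
    (exp_neg_integrableOn_Ioi s hΦ).const_mul (Real.exp (Φ * s))
  refine h.congr_fun (fun y _ => ?_) measurableSet_Ioi
  beta_reduce; rw [← Real.exp_add]; ring_nf

lemma expInt_value (hΦ : 0 < Φ) (s : ℝ) :
    ∫ y in Set.Ioi s, Real.exp (-Φ * (y - s)) = Φ⁻¹ := by
  have hderiv : ∀ x ∈ Set.Ioi s, HasDerivAt (fun y => -Φ⁻¹ * Real.exp (-Φ * (y - s)))
      (Real.exp (-Φ * (x - s))) x := by
    intro x _
    have := (expDeriv x (Φ := Φ) (s := s)).const_mul (-Φ⁻¹)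
    refine this.congr_deriv ?_
    have hΦ' : Φ ≠ 0 := hΦ.ne'
    field_simp
  have hcont : ContinuousWithinAt (fun y => -Φ⁻¹ * Real.exp (-Φ * (y - s))) (Set.Ici s) s :=
    (Continuous.continuousWithinAt (by continuity))
  have htend : Tendsto (fun y => -Φ⁻¹ * Real.exp (-Φ * (y - s))) atTop (𝓝 0) := by
    simpa using (expTendsto hΦ (s := s)).const_mul (-Φ⁻¹)
  have := integral_Ioi_of_hasDerivAt_of_tendsto hcont hderiv (expInt_integrable hΦ s) htend
  rw [this]; simp

lemma expMulDeriv (hΦ : 0 < Φ) (x : ℝ) :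
    HasDerivAt (fun y => -Real.exp (-Φ * (y - s)) * ((y - s) / Φ + 1 / Φ^2))
      (Real.exp (-Φ * (x - s)) * (x - s)) x := by
  have h1 := expDeriv x (Φ := Φ) (s := s)
  have h2 : HasDerivAt (fun y : ℝ => (y - s) / Φ + 1 / Φ^2) Φ⁻¹ x := by
    have := (((hasDerivAt_id x).sub_const s).div_const Φ).add_const (1/Φ^2)
    simpa [div_eq_mul_inv, one_div] using this
  have h3 := (h1.neg.mul h2)
  refine h3.congr_deriv ?_
  have hΦ' : Φ ≠ 0 := hΦ.ne'
  simp only [Pi.neg_apply]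
  field_simp
  ring

lemma expMulTendsto (hΦ : 0 < Φ) :
    Tendsto (fun y => -Real.exp (-Φ * (y - s)) * ((y - s) / Φ + 1 / Φ^2)) atTop (𝓝 0) := by
  have h0 : Tendsto (fun u : ℝ => u * Real.exp (-u)) atTop (𝓝 0) := by
    have := Real.tendsto_pow_mul_exp_neg_atTop_nhds_zero 1
    simpa using this
  have hlin : Tendsto (fun y : ℝ => Φ * (y - s)) atTop atTop :=
    (tendsto_const_mul_atTop_of_pos hΦ).2 (tendsto_atTop_add_const_right _ _ tendsto_id)
  have h1 : Tendsto (fun y : ℝ => (Φ * (y - s)) * Real.exp (-(Φ * (y - s)))) atTop (𝓝 0) :=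
    h0.comp hlin
  have h2 : Tendsto (fun y : ℝ => Real.exp (-(Φ * (y - s)))) atTop (𝓝 0) := by
    refine (expTendsto hΦ (s := s)).congr (fun y => by ring_nf)
  have h3 := (h1.const_mul (-(1/Φ^2))).add (h2.const_mul (-(1/Φ^2)))
  simp only [mul_zero, add_zero] at h3
  refine h3.congr (fun y => ?_)
  have hΦ' : Φ ≠ 0 := ne_of_gt hΦ
  field_simp
  ring

lemma expMulInt_integrable' (hΦ : 0 < Φ) (s : ℝ) :
    IntegrableOn (fun y => Real.exp (-Φ * (y - s)) * (y - s)) (Set.Ioi s) := by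
  refine integrableOn_Ioi_deriv_of_nonneg (Continuous.continuousWithinAt (by continuity))
    (fun x _ => expMulDeriv hΦ x) (fun x hx => ?_) (expMulTendsto hΦ (s := s))
  have : (0:ℝ) ≤ x - s := by
    have : s < x := hx
    linarith
  positivity

lemma expMulInt_value' (hΦ : 0 < Φ) (s : ℝ) :
    ∫ y in Set.Ioi s, Real.exp (-Φ * (y - s)) * (y - s) = 1/Φ^2 := by
  have := integral_Ioi_of_hasDerivAt_of_tendsto
    (Continuous.continuousWithinAt (f := fun y => -Real.exp (-Φ * (y - s)) * ((y - s) / Φ + 1 / Φ^2))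
      (by continuity))
    (fun x _ => expMulDeriv hΦ x) (expMulInt_integrable' hΦ s) (expMulTendsto hΦ (s := s))
  rw [this]
  simp

lemma expMulInt_integrable (hΦ : 0 < Φ) (s : ℝ) :
    IntegrableOn (fun y => Real.exp (-Φ * (y - s)) * y) (Set.Ioi s) := by
  have h : IntegrableOn
      (fun y => Real.exp (-Φ * (y - s)) * (y - s) + Real.exp (-Φ * (y - s)) * s)
      (Set.Ioi s) :=
    (expMulInt_integrable' hΦ s).add ((expInt_integrable hΦ s).mul_const s)
  refine h.congr_fun (fun y _ => by ring) measurableSet_Ioi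

lemma expMulInt_value (hΦ : 0 < Φ) (s : ℝ) :
    ∫ y in Set.Ioi s, Real.exp (-Φ * (y - s)) * y = s/Φ + 1/Φ^2 := by
  have h : ∀ y : ℝ, Real.exp (-Φ * (y - s)) * y
      = Real.exp (-Φ * (y - s)) * (y - s) + Real.exp (-Φ * (y - s)) * s := fun y => by ring
  rw [setIntegral_congr_fun measurableSet_Ioi (fun y _ => h y),
    integral_add (expMulInt_integrable' hΦ s) ((expInt_integrable hΦ s).mul_const s),
    expMulInt_value' hΦ s, integral_mul_const, expInt_value hΦ s]
  field_simp
  ring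

variable {C_U q : ℝ} {f f' : ℝ → ℝ}

lemma f'_meas (hf' : ∀ x, HasDerivWithinAt f (f' x) (Set.Ici x) x) : Measurable f' := by
  have h : f' = fun x => derivWithin f (Set.Ici x) x := by
    funext x
    exact ((hf' x).derivWithin ((uniqueDiffOn_Ici x) x Set.self_mem_Ici)).symm
  rw [h]
  exact measurable_derivWithin_Ici f

lemma ftilde'_int (hf' : ∀ x, HasDerivWithinAt f (f' x) (Set.Ici x) x)
    (hf'int : ∀ x : ℝ, IntegrableOn
      (fun y => Real.exp (-Φ * (y - x)) * |f' y + C_U * q|) (Set.Ioi x)) (x : ℝ) :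
    IntegrableOn (fun y => Real.exp (-Φ * (y - x)) * (f' y + C_U * q)) (Set.Ioi x) := by
  refine Integrable.mono' (hf'int x) ?_ ?_
  · exact ((Real.continuous_exp.comp (by continuity)).measurable.mul
      (((f'_meas hf').add measurable_const))).aestronglyMeasurable
  · refine Eventually.of_forall (fun y => ?_)
    rw [Real.norm_eq_abs, abs_mul, abs_of_pos (Real.exp_pos _)]

lemma ftilde_cont : Continuous (fun y => f y + C_U * q * y) → True := fun _ => trivial

lemma f'_intervalIntegrable (hΦ : 0 < Φ)
    (hf' : ∀ x, HasDerivWithinAt f (f' x) (Set.Ici x) x)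
    (hf'int : ∀ x : ℝ, IntegrableOn
      (fun y => Real.exp (-Φ * (y - x)) * |f' y + C_U * q|) (Set.Ioi x))
    {a b : ℝ} (hab : a ≤ b) : IntervalIntegrable f' volume a b := by
  rw [intervalIntegrable_iff_integrableOn_Ioc_of_le hab]
  have hbase : IntegrableOn
      (fun y => Real.exp (-Φ * (y - a)) * |f' y + C_U * q|) (Set.Ioc a b) :=
    (hf'int a).mono_set Set.Ioc_subset_Ioi_self
  have hbound : IntegrableOn
      (fun y => Real.exp (Φ * (b - a)) * (Real.exp (-Φ * (y - a)) * |f' y + C_U * q|)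
        + |C_U * q|) (Set.Ioc a b) := by
    exact (hbase.const_mul _).add (integrableOn_const measure_Ioc_lt_top.ne)
  refine Integrable.mono' hbound ((f'_meas hf').aestronglyMeasurable) ?_
  filter_upwards [ae_restrict_mem measurableSet_Ioc] with y hy
  have h1 : Real.exp (Φ * (b - a)) * Real.exp (-Φ * (y - a)) ≥ 1 := by
    rw [← Real.exp_add]
    refine Real.one_le_exp (by nlinarith [hy.1, hy.2, hΦ])
  have h2 : |f' y| ≤ |f' y + C_U * q| + |C_U * q| := by
    calc |f' y| = |(f' y + C_U * q) + (-(C_U * q))| := by ring_nf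
      _ ≤ |f' y + C_U * q| + |(-(C_U * q))| := abs_add_le _ _
      _ = |f' y + C_U * q| + |C_U * q| := by rw [abs_neg]
  rw [Real.norm_eq_abs]
  have h3 : |f' y + C_U * q| ≤ Real.exp (Φ * (b - a)) * (Real.exp (-Φ * (y - a)) * |f' y + C_U * q|) := by
    rw [← mul_assoc]
    nlinarith [abs_nonneg (f' y + C_U * q)]
  linarith

lemma ftc (hf : Continuous f) (hf' : ∀ x, HasDerivWithinAt f (f' x) (Set.Ici x) x)
    (hΦ : 0 < Φ)
    (hf'int : ∀ x : ℝ, IntegrableOn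
      (fun y => Real.exp (-Φ * (y - x)) * |f' y + C_U * q|) (Set.Ioi x))
    {a b : ℝ} (hab : a ≤ b) : ∫ y in a..b, f' y = f b - f a := by
  refine intervalIntegral.integral_eq_sub_of_hasDeriv_right_of_le hab hf.continuousOn
    (fun y _ => (hf' y).mono Set.Ioi_subset_Ici_self)
    (f'_intervalIntegrable hΦ hf' hf'int hab)

lemma fweight_int (hf : Continuous f) {s : ℝ}
    (hfint : IntegrableOn (fun y => Real.exp (-Φ * (y - s)) * |f y|) (Set.Ioi s)) :
    IntegrableOn (fun y => Real.exp (-Φ * (y - s)) * f y) (Set.Ioi s) := by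
  refine Integrable.mono' hfint ?_ ?_
  · exact ((Real.continuous_exp.comp (by continuity)).mul hf).aestronglyMeasurable
  · refine Eventually.of_forall (fun y => ?_)
    rw [Real.norm_eq_abs, abs_mul, abs_of_pos (Real.exp_pos _)]

lemma ftildeweight_int (hΦ : 0 < Φ) (hf : Continuous f) {s : ℝ}
    (hfint : IntegrableOn (fun y => Real.exp (-Φ * (y - s)) * |f y|) (Set.Ioi s)) :
    IntegrableOn (fun y => Real.exp (-Φ * (y - s)) * (f y + C_U * q * y)) (Set.Ioi s) := by
  have h := (fweight_int hf hfint).add ((expMulInt_integrable hΦ s).const_mul (C_U * q))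
  have h2 : IntegrableOn (fun y => Real.exp (-Φ * (y - s)) * f y
      + C_U * q * (Real.exp (-Φ * (y - s)) * y)) (Set.Ioi s) := h
  exact h2.congr_fun (fun y _ => by ring) measurableSet_Ioi

lemma psiInt_ibp (hΦ : 0 < Φ) (hq : 0 < q) (hf : Continuous f)
    (hf' : ∀ x, HasDerivWithinAt f (f' x) (Set.Ici x) x)
    {s : ℝ}
    (hftail : Tendsto (fun y => Real.exp (-Φ * y) * (f y + C_U * q * y)) atTop (𝓝 0))
    (hfint : IntegrableOn (fun y => Real.exp (-Φ * (y - s)) * |f y|) (Set.Ioi s))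
    (hf'int : ∀ x : ℝ, IntegrableOn
      (fun y => Real.exp (-Φ * (y - x)) * |f' y + C_U * q|) (Set.Ioi x)) :
    PsiInt Φ s (fun y => f' y + C_U * q)
      = -(f s) + Φ * PsiInt Φ s f + q * C_U / Φ := by
  classical
  set ft : ℝ → ℝ := fun y => f y + C_U * q * y with hft_def
  have hftcont : Continuous ft := by
    exact hf.add (continuous_const.mul continuous_id)
  set g : ℝ → ℝ := fun y => Real.exp (-Φ * (y - s)) * ft y with hg_def
  set g' : ℝ → ℝ := fun y => Real.exp (-Φ * (y - s)) * (-Φ) * ft y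
      + Real.exp (-Φ * (y - s)) * (f' y + C_U * q) with hg'_def
  -- g has right derivative g'
  have hgderiv : ∀ y : ℝ, HasDerivWithinAt g (g' y) (Set.Ici y) y := by
    intro y
    have h1 : HasDerivWithinAt (fun u => Real.exp (-Φ * (u - s)))
        (Real.exp (-Φ * (y - s)) * (-Φ)) (Set.Ici y) y := (expDeriv y).hasDerivWithinAt
    have h2 : HasDerivWithinAt ft (f' y + C_U * q) (Set.Ici y) y := by
      have hc : HasDerivAt (fun u : ℝ => C_U * q * u) (C_U * q) y := by
        simpa using (hasDerivAt_id y).const_mul (C_U * q)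
      exact (hf' y).add hc.hasDerivWithinAt
    have := h1.mul h2
    refine this.congr_deriv ?_
    ring
  -- integrability of g' on Ioi s
  have hg'int : IntegrableOn g' (Set.Ioi s) := by
    have h1 := (ftildeweight_int hΦ hf hfint (C_U := C_U) (q := q)).const_mul (-Φ)
    have h2 := ftilde'_int hf' hf'int s
    have h3 : IntegrableOn (fun y => -Φ * (Real.exp (-Φ * (y - s)) * (f y + C_U * q * y))
        + Real.exp (-Φ * (y - s)) * (f' y + C_U * q)) (Set.Ioi s) := h1.add h2
    exact h3.congr_fun (fun y _ => by rw [hg'_def, hft_def]; ring) measurableSet_Ioi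
  -- FTC on [s, T]
  have hftc : ∀ T, s ≤ T → ∫ y in s..T, g' y = g T - g s := by
    intro T hT
    refine intervalIntegral.integral_eq_sub_of_hasDeriv_right_of_le hT
      ((Real.continuous_exp.comp (by continuity)).mul hftcont).continuousOn
      (fun y _ => (hgderiv y).mono Set.Ioi_subset_Ici_self) ?_
    have hpart1 : IntervalIntegrable (fun y => Real.exp (-Φ * (y - s)) * (-Φ) * ft y)
        volume s T := by
      exact (((Real.continuous_exp.comp (by continuity)).mul continuous_const).mul
        hftcont).intervalIntegrable s T
    have hpart2 : IntervalIntegrable (fun y => Real.exp (-Φ * (y - s)) * (f' y + C_U * q))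
        volume s T := by
      have hfi : IntervalIntegrable (fun y => f' y + C_U * q) volume s T :=
        (f'_intervalIntegrable hΦ hf' hf'int hT).add (intervalIntegrable_const)
      have := hfi.mul_continuousOn (g := fun y => Real.exp (-Φ * (y - s)))
        ((Real.continuous_exp.comp (by continuity)).continuousOn)
      refine this.congr ?_
      exact fun y _ => by ring
    exact (hpart1.add hpart2)
  -- limit of g at infinity
  have hgtend : Tendsto g atTop (𝓝 0) := by
    have h := hftail.const_mul (Real.exp (Φ * s))
    rw [mul_zero] at h
    refine h.congr (fun y => ?_)
    rw [hg_def, hft_def]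
    simp only
    rw [← mul_assoc, ← Real.exp_add]
    ring_nf
  -- improper integral
  have himp : ∫ y in Set.Ioi s, g' y = -g s := by
    have h1 := intervalIntegral_tendsto_integral_Ioi s hg'int tendsto_id
    have h2 : Tendsto (fun T => g T - g s) atTop (𝓝 (0 - g s)) :=
      hgtend.sub_const (g s)
    rw [zero_sub] at h2
    refine tendsto_nhds_unique ?_ h2
    refine h1.congr' ?_
    filter_upwards [eventually_ge_atTop s] with T hT
    exact (hftc T hT)
  -- split the integral
  have h1 := (ftildeweight_int hΦ hf hfint (C_U := C_U) (q := q))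
  have h2 := ftilde'_int hf' hf'int s
  have hsplit : ∫ y in Set.Ioi s, g' y
      = -Φ * (∫ y in Set.Ioi s, Real.exp (-Φ * (y - s)) * ft y)
        + PsiInt Φ s (fun y => f' y + C_U * q) := by
    have hadd := integral_add (h1.const_mul (-Φ)) h2
    have e1 : ∫ y in Set.Ioi s, g' y
        = (∫ a in Set.Ioi s, -Φ * (Real.exp (-Φ * (a - s)) * (f a + C_U * q * a)))
          + ∫ a in Set.Ioi s, Real.exp (-Φ * (a - s)) * (f' a + C_U * q) := by
      rw [← hadd]
      refine setIntegral_congr_fun measurableSet_Ioi (fun y _ => ?_)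
      rw [hg'_def, hft_def]; ring
    rw [e1, integral_const_mul, PsiInt]
  -- value of the weighted ft integral
  have hI : ∫ y in Set.Ioi s, Real.exp (-Φ * (y - s)) * ft y
      = PsiInt Φ s f + C_U * q * (s/Φ + 1/Φ^2) := by
    have hadd := integral_add (fweight_int hf hfint)
      ((expMulInt_integrable hΦ s).const_mul (C_U * q))
    have e1 : ∫ y in Set.Ioi s, Real.exp (-Φ * (y - s)) * ft y
        = (∫ a in Set.Ioi s, Real.exp (-Φ * (a - s)) * f a)
          + ∫ a in Set.Ioi s, C_U * q * (Real.exp (-Φ * (a - s)) * a) := by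
      rw [← hadd]
      refine setIntegral_congr_fun measurableSet_Ioi (fun y _ => ?_)
      rw [hft_def]; ring
    rw [e1, integral_const_mul, expMulInt_value hΦ s, PsiInt]
  have hgs : g s = f s + C_U * q * s := by
    rw [hg_def, hft_def]; simp
  have hfinal : PsiInt Φ s (fun y => f' y + C_U * q)
      = Φ * (∫ y in Set.Ioi s, Real.exp (-Φ * (y - s)) * ft y) - g s := by
    rw [hsplit] at himp
    linarith
  rw [hfinal, hI, hgs]
  field_simp
  ring

lemma ae_ne' (c : ℝ) : ∀ᵐ y ∂(volume : Measure ℝ), y ≠ c := by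
  refine ae_iff.2 ?_
  have : {a : ℝ | ¬a ≠ c} = {c} := by ext a; simp
  rw [this]; exact measure_singleton c

lemma ftilde_decrease (hΦ : 0 < Φ) (hf : Continuous f)
    (hf' : ∀ x, HasDerivWithinAt f (f' x) (Set.Ici x) x)
    (hf'int : ∀ x : ℝ, IntegrableOn
      (fun y => Real.exp (-Φ * (y - x)) * |f' y + C_U * q|) (Set.Ioi x))
    {x s abar : ℝ} (hx : x < s) (hs : s ≤ abar)
    (habar1 : ∀ y < abar, f' y + C_U * q < 0) :
    0 ≤ (f x + C_U * q * x) - (f s + C_U * q * s) := by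
  have hftc : ∫ y in x..s, f' y = f s - f x := ftc hf hf' hΦ hf'int hx.le
  have hle : ∫ y in x..s, (f' y + C_U * q) ≤ 0 := by
    rw [intervalIntegral.integral_of_le hx.le]
    refine integral_nonpos_of_ae ?_
    filter_upwards [ae_restrict_mem measurableSet_Ioc, ae_restrict_of_ae (ae_ne' s)]
      with y hy hne
    have hys : y < s := lt_of_le_of_ne hy.2 hne
    exact le_of_lt (habar1 y (by linarith))
  have hint : ∫ y in x..s, (f' y + C_U * q) = (f s - f x) + C_U * q * (s - x) := by
    rw [intervalIntegral.integral_add (f'_intervalIntegrable hΦ hf' hf'int hx.le)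
      intervalIntegrable_const, hftc, intervalIntegral.integral_const]
    simp only [smul_eq_mul]
    ring
  rw [hint] at hle
  nlinarith

lemma psiInt_nonpos (hΦ : 0 < Φ)
    (hf' : ∀ x, HasDerivWithinAt f (f' x) (Set.Ici x) x)
    (hf'int : ∀ x : ℝ, IntegrableOn
      (fun y => Real.exp (-Φ * (y - x)) * |f' y + C_U * q|) (Set.Ioi x))
    {aund s : ℝ} (hs : s ≤ aund)
    (hund1 : ∀ x < aund, PsiInt Φ x (fun y => f' y + C_U * q) < 0) :
    PsiInt Φ s (fun y => f' y + C_U * q) ≤ 0 := by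
  rcases lt_or_eq_of_le hs with h | h
  · exact (hund1 s h).le
  · subst h
    set w : ℝ → ℝ := fun y => Real.exp (-Φ * y) * (f' y + C_U * q) with hw_def
    have hw_int : ∀ x : ℝ, IntegrableOn w (Set.Ioi x) := by
      intro x
      have h1 := (ftilde'_int hf' hf'int x).const_mul (Real.exp (-Φ * x))
      have h2 : IntegrableOn
          (fun y => Real.exp (-Φ * x) * (Real.exp (-Φ * (y - x)) * (f' y + C_U * q)))
          (Set.Ioi x) := h1
      refine h2.congr_fun (fun y _ => ?_) measurableSet_Ioi
      rw [hw_def]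
      simp only
      rw [← mul_assoc, ← Real.exp_add]
      ring_nf
    have hPsiG : ∀ x : ℝ, PsiInt Φ x (fun y => f' y + C_U * q)
        = Real.exp (Φ * x) * ∫ y in Set.Ioi x, w y := by
      intro x
      rw [PsiInt, ← integral_const_mul]
      refine setIntegral_congr_fun measurableSet_Ioi (fun y _ => ?_)
      rw [hw_def]
      simp only
      rw [← mul_assoc, ← Real.exp_add]
      ring_nf
    set xs : ℕ → ℝ := fun n => s - ((n:ℝ)+1)⁻¹ with hxs_def
    have hxs_lt : ∀ n, xs n < s := fun n => by
      rw [hxs_def]; simp only; have : (0:ℝ) < ((n:ℝ)+1)⁻¹ := by positivity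
      linarith
    have hxs_mono : Monotone xs := by
      intro n m hnm
      rw [hxs_def]; simp only
      have hnm' : (n:ℝ) ≤ m := Nat.cast_le.2 hnm
      have : ((m:ℝ)+1)⁻¹ ≤ ((n:ℝ)+1)⁻¹ := by
        apply inv_anti₀ (by positivity)
        linarith
      linarith
    have hanti : Antitone (fun n => Set.Ioi (xs n)) := fun n m hnm =>
      Set.Ioi_subset_Ioi (hxs_mono hnm)
    have hiInter : ⋂ n, Set.Ioi (xs n) = Set.Ici s := by
      ext y
      simp only [Set.mem_iInter, Set.mem_Ioi, Set.mem_Ici]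
      constructor
      · intro h
        by_contra hlt
        push_neg at hlt
        obtain ⟨n, hn⟩ := exists_nat_one_div_lt (by linarith : 0 < s - y)
        have h1 := h n
        rw [hxs_def] at h1
        simp only at h1
        rw [one_div] at hn
        linarith
      · intro h n
        exact lt_of_lt_of_le (hxs_lt n) h
    have htend := tendsto_setIntegral_of_antitone (fun n => measurableSet_Ioi) hanti
      ⟨0, hw_int (xs 0)⟩
    rw [hiInter] at htend
    have hle : ∫ y in Set.Ioi s, w y ≤ 0 := by
      rw [← integral_Ici_eq_integral_Ioi]
      refine le_of_tendsto htend (Eventually.of_forall (fun n => ?_))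
      have h1 := hund1 (xs n) (hxs_lt n)
      rw [hPsiG (xs n)] at h1
      nlinarith [Real.exp_pos (Φ * xs n)]
    rw [hPsiG s]
    nlinarith [Real.exp_pos (Φ * s)]

theorem stmt7
    (γ σ q : ℝ) (ν : Measure ℝ) (W : ℝ → ℝ)
    (hσ : 0 ≤ σ)
    (hνconc : ν (Set.Ici 0) = 0)
    (hνint : Integrable (fun z => min 1 (z ^ 2)) ν)
    (hψtop : Tendsto (psi γ σ ν) atTop atTop)
    (hq : 0 < q)
    (hΦpos : 0 < PhiQ γ σ ν q)
    (hWnonneg : ∀ x, 0 ≤ W x)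
    (hWzero : ∀ x < 0, W x = 0)
    (hWcont : ContinuousOn W (Set.Ici 0))
    (hWmono : StrictMonoOn W (Set.Ici 0))
    (hWlaplace : ∀ s, PhiQ γ σ ν q < s →
      ∫ x in Set.Ioi (0:ℝ), Real.exp (-s * x) * W x = 1 / (psi γ σ ν s - q))
    (psi'0 : ℝ) (hpsi'0 : HasDerivWithinAt (psi γ σ ν) psi'0 (Set.Ici 0) 0)
    (C_U : ℝ) (f f' : ℝ → ℝ) (hf : Continuous f)
    (hf' : ∀ x, HasDerivWithinAt f (f' x) (Set.Ici x) x)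
    (s : ℝ)
    (hftail : Tendsto (fun y => Real.exp (-(PhiQ γ σ ν q) * y) * (f y + C_U * q * y))
      atTop (𝓝 0))
    (hfint : IntegrableOn
      (fun y => Real.exp (-(PhiQ γ σ ν q) * (y - s)) * |f y|) (Set.Ioi s))
    (hf'int : ∀ x : ℝ, IntegrableOn
      (fun y => Real.exp (-(PhiQ γ σ ν q) * (y - x)) * |f' y + C_U * q|) (Set.Ioi x))
    (aund abar : ℝ) (haa : aund ≤ abar)
    (habar1 : ∀ x < abar, f' x + C_U * q < 0)
    (habar2 : ∀ x, abar < x → 0 < f' x + C_U * q)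
    (hund1 : ∀ x < aund, PsiInt (PhiQ γ σ ν q) x (fun y => f' y + C_U * q) < 0)
    (hund2 : ∀ x, aund < x → 0 < PsiInt (PhiQ γ σ ν q) x (fun y => f' y + C_U * q))
    (hs : s ≤ aund) :
    ∀ x < s,
      vImp q (PhiQ γ σ ν q) psi'0 C_U s W f x
          = vImp q (PhiQ γ σ ν q) psi'0 C_U s W f s - C_U * (x - s) ∧
      IntegrableOn (genInt (vImp q (PhiQ γ σ ν q) psi'0 C_U s W f) x) (Set.Iio 0) ν ∧
      Lgen γ σ ν (vImp q (PhiQ γ σ ν q) psi'0 C_U s W f) x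
          - q * vImp q (PhiQ γ σ ν q) psi'0 C_U s W f x + f x
        = (f x + C_U * q * x) - (f s + C_U * q * s)
            - PsiInt (PhiQ γ σ ν q) s (fun y => f' y + C_U * q) ∧
      0 ≤ (f x + C_U * q * x) - (f s + C_U * q * s)
            - PsiInt (PhiQ γ σ ν q) s (fun y => f' y + C_U * q) := by
  intro x hx
  set Φq := PhiQ γ σ ν q with hΦq_def
  obtain ⟨hIntNeg, hIntVal⟩ := levy_key hνint hpsi'0
  set v := vImp q Φq psi'0 C_U s W f with hv_def
  have hpart1 : v x = v s - C_U * (x - s) :=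
    vImp_affine q Φq psi'0 C_U s W f hWzero hx.le
  have hderivv : deriv v x = -C_U := deriv_vImp q Φq psi'0 C_U s W f hWzero hx
  have hgen : ∀ z ∈ Set.Iio (0:ℝ),
      genInt v x z = C_U * z * ((if -1 < z then (1:ℝ) else 0) - 1) := by
    intro z hz
    have hz0 : z < 0 := hz
    have hxz : x + z ≤ s := by linarith
    have haff : v (x + z) = v s - C_U * (x + z - s) :=
      vImp_affine q Φq psi'0 C_U s W f hWzero hxz
    rw [genInt, hderivv, haff, hpart1]
    ring
  have hIic : IntegrableOn (fun z => C_U * z * ((if -1 < z then (1:ℝ) else 0) - 1))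
      (Set.Iic (-1:ℝ)) ν := by
    have hmul : IntegrableOn (fun z : ℝ => C_U * -z) (Set.Iic (-1:ℝ)) ν :=
      hIntNeg.const_mul C_U
    refine hmul.congr_fun (fun z hz => ?_) measurableSet_Iic
    have hz' : z ≤ -1 := hz
    rw [if_neg (by linarith)]
    ring
  have hIoo : IntegrableOn (fun z => C_U * z * ((if -1 < z then (1:ℝ) else 0) - 1))
      (Set.Ioo (-1:ℝ) 0) ν := by
    have h0 : IntegrableOn (fun _ : ℝ => (0:ℝ)) (Set.Ioo (-1:ℝ) 0) ν := by
      simp [IntegrableOn]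
    refine h0.congr_fun (fun z hz => ?_) measurableSet_Ioo
    rw [if_pos hz.1]
    ring
  have hexp_int : IntegrableOn (fun z => C_U * z * ((if -1 < z then (1:ℝ) else 0) - 1))
      (Set.Iio (0:ℝ)) ν := by
    rw [← Iio_split]
    exact hIic.union hIoo
  have hint_gen : IntegrableOn (genInt v x) (Set.Iio 0) ν :=
    hexp_int.congr_fun (fun z hz => (hgen z hz).symm) measurableSet_Iio
  have hintval : ∫ z in Set.Iio 0, genInt v x z ∂ν = C_U * (γ - psi'0) := by
    rw [setIntegral_congr_fun measurableSet_Iio hgen, ← Iio_split,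
      setIntegral_union Iio_disj measurableSet_Ioo hIic hIoo]
    have e1 : ∫ z in Set.Iic (-1:ℝ), C_U * z * ((if -1 < z then (1:ℝ) else 0) - 1) ∂ν
        = C_U * ∫ z in Set.Iic (-1:ℝ), -z ∂ν := by
      rw [← integral_const_mul]
      refine setIntegral_congr_fun measurableSet_Iic (fun z hz => ?_)
      have hz' : z ≤ -1 := hz
      rw [if_neg (by linarith)]
      ring
    have e2 : ∫ z in Set.Ioo (-1:ℝ) 0, C_U * z * ((if -1 < z then (1:ℝ) else 0) - 1) ∂ν
        = 0 := by
      rw [setIntegral_congr_fun measurableSet_Ioo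
        (fun z hz => by rw [if_pos hz.1]; ring : ∀ z ∈ Set.Ioo (-1:ℝ) 0,
          C_U * z * ((if -1 < z then (1:ℝ) else 0) - 1) = (0:ℝ))]
      simp
    rw [e1, e2, hIntVal]
    ring
  have hd2 : deriv (deriv v) x = 0 := deriv2_vImp q Φq psi'0 C_U s W f hWzero hx
  have hL : Lgen γ σ ν v x = -C_U * psi'0 := by
    rw [Lgen, hderivv, hd2, hintval]
    ring
  have hvs : v s = Φq / q * PsiInt Φq s f + C_U / Φq - C_U * (psi'0 / q) := by
    rw [hv_def, vImp, sub_self, Zfun_nonpos q W hWzero le_rfl, Rfun,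
      Zbar_nonpos q W hWzero le_rfl, phiInt_nonpos W f hWzero le_rfl]
    ring
  have hibp : PsiInt Φq s (fun y => f' y + C_U * q)
      = -(f s) + Φq * PsiInt Φq s f + q * C_U / Φq :=
    psiInt_ibp hΦpos hq hf hf' hftail hfint hf'int
  refine ⟨hpart1, hint_gen, ?_, ?_⟩
  · rw [hL, hpart1, hvs, hibp]
    have hqne : q ≠ 0 := ne_of_gt hq
    have hΦne : Φq ≠ 0 := ne_of_gt hΦpos
    field_simp
    ring
  · have h1 : 0 ≤ (f x + C_U * q * x) - (f s + C_U * q * s) :=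
      ftilde_decrease hΦpos hf hf' hf'int hx (le_trans hs haa) habar1
    have h2 : PsiInt Φq s (fun y => f' y + C_U * q) ≤ 0 :=
      psiInt_nonpos hΦpos hf' hf'int hs hund1
    linarith
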